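/- If a measurement assemblage {M_{a|x}} is jointly measurable, i.e., M_{a|x} = Σ_λ p(a|x,λ) G_λ for some POVM {G_λ} and conditional probabilities p(a|x,λ), then for any density matrix ρ the state assemblage σ_{a|x} = ρ^{1/2} M_{a|x} ρ^{1/2} admits a local-hidden-state model, i.e., σ_{a|x} = Σ_λ q(λ) p(a|x,λ) ρ_λ for some probability distribution q and density matrices ρ_λ. -/

import Mathlib

open Matrix Kronecker BigOperators ComplexOrder

noncomputable section

/-- A density matrix: positive semidefinite with unit trace. -/
def IsDensity {d : ℕ} (ρ : Matrix (Fin d) (Fin d) ℂ) : Prop :=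
  ρ.PosSemidef ∧ ρ.trace = 1

/-- A POVM: positive semidefinite effects summing to the identity. -/
def IsPOVM {d nl : ℕ} (G : Fin nl → Matrix (Fin d) (Fin d) ℂ) : Prop :=
  (∀ l, (G l).PosSemidef) ∧ ∑ l, G l = 1

/-- A measurement assemblage: for each setting `x`, a POVM `a ↦ M x a`. -/
def IsMA {d na nx : ℕ} (M : Fin nx → Fin na → Matrix (Fin d) (Fin d) ℂ) : Prop :=
  (∀ x a, (M x a).PosSemidef) ∧ ∀ x, ∑ a, M x a = 1

/-- Joint measurability: `M x a = ∑ λ p(a|x,λ) G λ` for a parent POVM `G`. -/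
def JM {d na nx : ℕ} (M : Fin nx → Fin na → Matrix (Fin d) (Fin d) ℂ) : Prop :=
  ∃ (nl : ℕ) (G : Fin nl → Matrix (Fin d) (Fin d) ℂ)
    (p : Fin nx → Fin na → Fin nl → ℝ),
    IsPOVM G ∧ (∀ x a l, 0 ≤ p x a l) ∧ (∀ x l, ∑ a, p x a l = 1) ∧
    ∀ x a, M x a = ∑ l, (p x a l : ℂ) • G l

/-- A state assemblage: PSD elements with an `x`-independent reduced density matrix. -/
def IsSA {d na nx : ℕ} (σ : Fin nx → Fin na → Matrix (Fin d) (Fin d) ℂ) : Prop :=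
  (∀ x a, (σ x a).PosSemidef) ∧
  ∃ ρ : Matrix (Fin d) (Fin d) ℂ, IsDensity ρ ∧ ∀ x, ∑ a, σ x a = ρ

/-- Local-hidden-state model: `σ x a = ∑ λ q(λ) p(a|x,λ) ρ_λ`. -/
def LHS {d na nx : ℕ} (σ : Fin nx → Fin na → Matrix (Fin d) (Fin d) ℂ) : Prop :=
  ∃ (nl : ℕ) (q : Fin nl → ℝ) (p : Fin nx → Fin na → Fin nl → ℝ)
    (ρ : Fin nl → Matrix (Fin d) (Fin d) ℂ),
    (∀ l, 0 ≤ q l) ∧ (∑ l, q l = 1) ∧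
    (∀ x a l, 0 ≤ p x a l) ∧ (∀ x l, ∑ a, p x a l = 1) ∧
    (∀ l, IsDensity (ρ l)) ∧
    ∀ x a, σ x a = ∑ l, ((q l * p x a l : ℝ) : ℂ) • ρ l

/-- Incompatibility robustness. -/
def IR {d na nx : ℕ} (B : Fin nx → Fin na → Matrix (Fin d) (Fin d) ℂ) : ℝ :=
  sInf {t : ℝ | 0 ≤ t ∧ ∃ N, IsMA N ∧
    JM (fun x a => (((1 + t : ℝ))⁻¹ : ℂ) • (B x a + (t : ℂ) • N x a))}

/-- Steering robustness. -/
def SR {d na nx : ℕ} (σ : Fin nx → Fin na → Matrix (Fin d) (Fin d) ℂ) : ℝ :=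
  sInf {t : ℝ | 0 ≤ t ∧ ∃ ξ, IsSA ξ ∧
    LHS (fun x a => (((1 + t : ℝ))⁻¹ : ℂ) • (σ x a + (t : ℂ) • ξ x a))}

/-- Incompatible weight. -/
def IW {d na nx : ℕ} (B : Fin nx → Fin na → Matrix (Fin d) (Fin d) ℂ) : ℝ :=
  sInf {t : ℝ | 0 ≤ t ∧ t ≤ 1 ∧ ∃ N O, IsMA N ∧ JM O ∧
    ∀ x a, B x a = (t : ℂ) • N x a + ((1 - t : ℝ) : ℂ) • O x a}

/-- Steerable weight. -/
def SW {d na nx : ℕ} (σ : Fin nx → Fin na → Matrix (Fin d) (Fin d) ℂ) : ℝ :=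
  sInf {t : ℝ | 0 ≤ t ∧ t ≤ 1 ∧ ∃ ξ τ, IsSA ξ ∧ LHS τ ∧
    ∀ x a, σ x a = (t : ℂ) • ξ x a + ((1 - t : ℝ) : ℂ) • τ x a}

/-- Positive map on matrices. -/
def PosMap {d : ℕ} (E : Matrix (Fin d) (Fin d) ℂ →ₗ[ℂ] Matrix (Fin d) (Fin d) ℂ) : Prop :=
  ∀ X, X.PosSemidef → (E X).PosSemidef

/-- Trace-nonincreasing on PSD matrices. -/
def TNI {d : ℕ} (E : Matrix (Fin d) (Fin d) ℂ →ₗ[ℂ] Matrix (Fin d) (Fin d) ℂ) : Prop :=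
  ∀ X : Matrix (Fin d) (Fin d) ℂ, X.PosSemidef → (E X).trace.re ≤ X.trace.re

/-- `Ed` is the Hilbert–Schmidt adjoint of `E`. -/
def IsAdjoint {d : ℕ} (E Ed : Matrix (Fin d) (Fin d) ℂ →ₗ[ℂ] Matrix (Fin d) (Fin d) ℂ) : Prop :=
  ∀ X Y, ((E X)ᴴ * Y).trace = (Xᴴ * (Ed Y)).trace

/-- Partial trace over the first tensor factor. -/
def ptraceA {d d' : ℕ} (M : Matrix (Fin d × Fin d') (Fin d × Fin d') ℂ) :
    Matrix (Fin d') (Fin d') ℂ :=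
  Matrix.of fun i j => ∑ k : Fin d, M (k, i) (k, j)

/-- The map `E ⊗ id` acting on bipartite matrices. -/
def tensId {d d' : ℕ} (E : Matrix (Fin d) (Fin d) ℂ →ₗ[ℂ] Matrix (Fin d) (Fin d) ℂ)
    (M : Matrix (Fin d × Fin d') (Fin d × Fin d') ℂ) :
    Matrix (Fin d × Fin d') (Fin d × Fin d') ℂ :=
  Matrix.of fun p q => E (Matrix.of fun i k => M (i, p.2) (k, q.2)) p.1 q.1

/-- The positive semidefinite square root, as `Matrix.PosSemidef.sqrt` was defined in the older Mathlib. -/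
def posSemidefSqrt {d : ℕ} {ρ : Matrix (Fin d) (Fin d) ℂ} (hρ : ρ.PosSemidef) :
    Matrix (Fin d) (Fin d) ℂ :=
  hρ.1.eigenvectorUnitary.1 * diagonal ((↑) ∘ (√·) ∘ hρ.1.eigenvalues) *
    (star hρ.1.eigenvectorUnitary : Matrix (Fin d) (Fin d) ℂ)

lemma posSemidefSqrt_herm {d : ℕ} {ρ : Matrix (Fin d) (Fin d) ℂ} (hρ : ρ.PosSemidef) :
    (posSemidefSqrt hρ)ᴴ = posSemidefSqrt hρ := by
  unfold posSemidefSqrt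
  have hd : star (((↑) ∘ (√·) ∘ hρ.1.eigenvalues) : Fin d → ℂ) =
      (↑) ∘ (√·) ∘ hρ.1.eigenvalues := by
    funext i
    exact Complex.conj_ofReal _
  rw [conjTranspose_mul, conjTranspose_mul, diagonal_conjTranspose, hd]
  simp [Matrix.mul_assoc, Matrix.star_eq_conjTranspose]

lemma posSemidefSqrt_mul_self {d : ℕ} {ρ : Matrix (Fin d) (Fin d) ℂ} (hρ : ρ.PosSemidef) :
    posSemidefSqrt hρ * posSemidefSqrt hρ = ρ := by
  unfold posSemidefSqrt
  have hU : (star hρ.1.eigenvectorUnitary : Matrix (Fin d) (Fin d) ℂ) *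
      hρ.1.eigenvectorUnitary.1 = 1 := Unitary.coe_star_mul_self _
  have hD : diagonal ((↑) ∘ (√·) ∘ hρ.1.eigenvalues) *
      diagonal ((↑) ∘ (√·) ∘ hρ.1.eigenvalues) =
      diagonal (RCLike.ofReal ∘ hρ.1.eigenvalues : Fin d → ℂ) := by
    rw [diagonal_mul_diagonal]
    congr 1
    ext i
    simp only [Function.comp_apply, ← Complex.ofReal_mul,
      Real.mul_self_sqrt (hρ.eigenvalues_nonneg i)]
    rfl
  calc _ = hρ.1.eigenvectorUnitary.1 * (diagonal ((↑) ∘ (√·) ∘ hρ.1.eigenvalues) *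
      ((star hρ.1.eigenvectorUnitary : Matrix (Fin d) (Fin d) ℂ) *
      hρ.1.eigenvectorUnitary.1) * diagonal ((↑) ∘ (√·) ∘ hρ.1.eigenvalues)) *
      (star hρ.1.eigenvectorUnitary : Matrix (Fin d) (Fin d) ℂ) := by
        simp only [Matrix.mul_assoc]
    _ = ρ := by
      rw [hU, Matrix.mul_one, hD]
      conv_rhs => rw [hρ.1.spectral_theorem]
      simp [Unitary.coe_star]



lemma psd_smul_real {d : ℕ} {A : Matrix (Fin d) (Fin d) ℂ} (hA : A.PosSemidef)
    {c : ℝ} (hc : 0 ≤ c) : ((c : ℂ) • A).PosSemidef := by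
  constructor
  · unfold Matrix.IsHermitian
    rw [conjTranspose_smul, hA.1]
    simp [Complex.star_def, Complex.conj_ofReal]
  · exact (hA.smul (show (0:ℂ) ≤ c by exact_mod_cast hc)).2

/-- PSD trace: there is a nonneg real `r` with `trace = r`, and `r = 0` forces `A = 0`. -/
lemma psd_trace {d : ℕ} {A : Matrix (Fin d) (Fin d) ℂ} (hA : A.PosSemidef) :
    ∃ r : ℝ, 0 ≤ r ∧ A.trace = (r : ℂ) ∧ (r = 0 → A = 0) := by
  set B := posSemidefSqrt hA with hB
  have hBH : Bᴴ = B := posSemidefSqrt_herm hA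
  have hAB : A = Bᴴ * B := by rw [hBH]; exact (posSemidefSqrt_mul_self hA).symm
  refine ⟨∑ j, ∑ i, Complex.normSq (B i j), ?_, ?_, ?_⟩
  · exact Finset.sum_nonneg fun j _ => Finset.sum_nonneg fun i _ => Complex.normSq_nonneg _
  · rw [hAB, Matrix.trace]
    push_cast
    refine Finset.sum_congr rfl fun j _ => ?_
    simp only [Matrix.diag_apply, Matrix.mul_apply, conjTranspose_apply]
    refine Finset.sum_congr rfl fun i _ => ?_
    rw [Complex.star_def, Complex.normSq_eq_conj_mul_self]
  · intro hr
    have hB0 : B = 0 := by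
      ext i j
      have h1 : ∀ j' ∈ Finset.univ, (0:ℝ) ≤ ∑ i, Complex.normSq (B i j') :=
        fun j' _ => Finset.sum_nonneg fun i _ => Complex.normSq_nonneg _
      have h2 := (Finset.sum_eq_zero_iff_of_nonneg h1).mp hr j (Finset.mem_univ j)
      have h3 : ∀ i' ∈ Finset.univ, (0:ℝ) ≤ Complex.normSq (B i' j) :=
        fun i' _ => Complex.normSq_nonneg _
      have h4 := (Finset.sum_eq_zero_iff_of_nonneg h3).mp h2 i (Finset.mem_univ i)
      simpa using Complex.normSq_eq_zero.mp h4
    rw [hAB, hB0]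
    simp

/-- conjugating a jointly measurable assemblage by `ρ^{1/2}` yields
an LHS state assemblage. -/
theorem jm_conj_lhs {d na nx : ℕ}
    (M : Fin nx → Fin na → Matrix (Fin d) (Fin d) ℂ)
    (hM : IsMA M) (hJM : JM M)
    (ρ : Matrix (Fin d) (Fin d) ℂ) (hρ : ρ.PosSemidef) (hρ1 : ρ.trace = 1) :
    LHS (fun x a => posSemidefSqrt hρ * M x a * posSemidefSqrt hρ) := by
  unfold JM IsPOVM at hJM
  unfold LHS IsDensity
  obtain ⟨nl, G, p, hG, hp0, hp1, hMeq⟩ := hJM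
  set S := posSemidefSqrt hρ with hS
  have hSH : Sᴴ = S := posSemidefSqrt_herm hρ
  set σf : Fin nl → Matrix (Fin d) (Fin d) ℂ := fun l => S * G l * S with hσf
  have hσpsd : ∀ l, (σf l).PosSemidef := fun l => by
    have := (hG.1 l).mul_mul_conjTranspose_same S
    rwa [hSH] at this
  choose q hq0 hqtr hqz using fun l => psd_trace (hσpsd l)
  have hsum : ∑ l, σf l = ρ := by
    simp only [hσf]
    rw [← Finset.sum_mul, ← Finset.mul_sum, hG.2, mul_one]
    exact posSemidefSqrt_mul_self hρ
  have hq1 : ∑ l, q l = 1 := by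
    have h2 : ∑ l, ((q l : ℝ) : ℂ) = 1 := by
      simp_rw [← hqtr]
      rw [← Matrix.trace_sum, hsum, hρ1]
    exact_mod_cast h2
  classical
  set ρf : Fin nl → Matrix (Fin d) (Fin d) ℂ :=
    fun l => if q l = 0 then ρ else (((q l)⁻¹ : ℝ) : ℂ) • σf l with hρf
  have key : ∀ l, ((q l : ℝ) : ℂ) • ρf l = σf l := by
    intro l
    by_cases h : q l = 0
    · simp [hρf, h, hqz l h]
    · simp only [hρf, if_neg h, smul_smul]
      rw [← Complex.ofReal_mul, mul_inv_cancel₀ h]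
      simp
  refine ⟨nl, q, p, ρf, hq0, hq1, hp0, hp1, fun l => ?_, fun x a => ?_⟩
  · by_cases h : q l = 0
    · simp only [hρf, if_pos h]; exact ⟨hρ, hρ1⟩
    · simp only [hρf, if_neg h]
      refine ⟨psd_smul_real (hσpsd l) (inv_nonneg.mpr (hq0 l)), ?_⟩
      rw [Matrix.trace_smul, hqtr l, smul_eq_mul, ← Complex.ofReal_mul,
        inv_mul_cancel₀ h, Complex.ofReal_one]
  · show S * M x a * S = _
    rw [hMeq x a, Finset.mul_sum, Finset.sum_mul]
    refine Finset.sum_congr rfl fun l _ => ?_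
    rw [Complex.ofReal_mul, mul_comm, mul_smul, key l]
    rw [Matrix.mul_smul, Matrix.smul_mul]
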